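/- Let P be a path with k edges (k ∈ ℕ) whose vertices in order are x_0, x_1, …, x_k, and let L be an m-assignment for P with m ≥ 2. For each (c,d) ∈ L(x_0) × L(x_k), let N(c,d) be the number of proper L-colorings of P coloring x_0 with c and x_k with d. Then there is a partition {A,B} of L(x_0) × L(x_k) with |A| = m and |B| = m(m−1) such that N(c,d) ≥ ((m−1)^k − (−1)^k)/m + (−1)^k for every (c,d) ∈ A, and N(c,d) ≥ ((m−1)^k − (−1)^k)/m for every (c,d) ∈ B. -/

import Mathlib

open SimpleGraph Finset

/-- A proper `L`-coloring of `G`: each vertex gets a color from its list and adjacent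
vertices get different colors. -/
def ProperLColoring {V : Type*} (G : SimpleGraph V) (L : V → Finset ℕ) (f : V → ℕ) : Prop :=
  (∀ v, f v ∈ L v) ∧ ∀ ⦃u w⦄, G.Adj u w → f u ≠ f w

/-- `P(G,L)`: the number of proper `L`-colorings of `G`. -/
noncomputable def PList {V : Type*} (G : SimpleGraph V) (L : V → Finset ℕ) : ℕ :=
  Nat.card {f : V → ℕ // ProperLColoring G L f}

/-- `P(G,m)`: the number of proper colorings of `G` with colors from `{1, …, m}`. -/
noncomputable def PChrom {V : Type*} (G : SimpleGraph V) (m : ℕ) : ℕ :=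
  PList G (fun _ => Finset.Icc 1 m)

/-- The list color function `P_ℓ(G,m)`: the minimum of `P(G,L)` over all `m`-assignments. -/
noncomputable def PListFn {V : Type*} (G : SimpleGraph V) (m : ℕ) : ℕ :=
  sInf {n | ∃ L : V → Finset ℕ, (∀ v, (L v).card = m) ∧ n = PList G L}

/-- `G` is enumeratively chromatic-choosable: `P_ℓ(G,m) = P(G,m)` for all `m ∈ ℕ = {1,2,…}`. -/
def EnumChromChoosable {V : Type*} (G : SimpleGraph V) : Prop :=
  ∀ m : ℕ, 1 ≤ m → PListFn G m = PChrom G m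

/-- Vertices of the theta graph `Θ(l1,l2,l3)`: the end vertices `u = Sum.inl false` and
`v = Sum.inl true`, together with the `lᵢ - 1` internal vertices of the `i`-th path. -/
abbrev ThetaVert (l1 l2 l3 : ℕ) : Type :=
  Bool ⊕ (Σ i : Fin 3, Fin (![l1, l2, l3] i - 1))

/-- Edges of the theta graph (up to symmetrization): the internal vertices of the `i`-th path,
in order, form a path from `u` to `v`; if some path has length 1 then `u` and `v` are adjacent. -/
def thetaRel (l1 l2 l3 : ℕ) : ThetaVert l1 l2 l3 → ThetaVert l1 l2 l3 → Prop :=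
  fun a b =>
    match a, b with
    | Sum.inl false, Sum.inl true => l1 = 1 ∨ l2 = 1 ∨ l3 = 1
    | Sum.inl false, Sum.inr ⟨_, j⟩ => (j : ℕ) = 0
    | Sum.inr ⟨i, j⟩, Sum.inl true => (j : ℕ) + 2 = ![l1, l2, l3] i
    | Sum.inr ⟨i, j⟩, Sum.inr ⟨i', j'⟩ => i = i' ∧ (j : ℕ) + 1 = (j' : ℕ)
    | _, _ => False

/-- The theta graph `Θ(l1,l2,l3)`: two end vertices joined by three internally disjoint
paths of lengths `l1`, `l2`, `l3`. -/
def thetaGraph (l1 l2 l3 : ℕ) : SimpleGraph (ThetaVert l1 l2 l3) :=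
  SimpleGraph.fromRel (thetaRel l1 l2 l3)

/-- A DP-cover `(L, H)` of `G`. -/
structure DPCover {V : Type*} (G : SimpleGraph V) (W : Type*) where
  H : SimpleGraph W
  L : V → Set W
  partition : ∀ w : W, ∃! v : V, w ∈ L v
  matching : ∀ ⦃u v : V⦄, G.Adj u v → ∀ ⦃x y y' : W⦄, x ∈ L u → y ∈ L v → y' ∈ L v →
      H.Adj x y → H.Adj x y' → y = y'
  cross : ∀ ⦃x y : W⦄, H.Adj x y → ∃ u v, G.Adj u v ∧ x ∈ L u ∧ y ∈ L v

/-- A proper `H`-coloring: an independent transversal of the cover. -/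
def DPCover.IsProperColoring {V W : Type*} {G : SimpleGraph V} (C : DPCover G W)
    (T : Set W) : Prop :=
  (∀ v : V, ∃! w : W, w ∈ T ∧ w ∈ C.L v) ∧ ∀ ⦃x y⦄, x ∈ T → y ∈ T → ¬ C.H.Adj x y

/-- `P_DP(G, H)`: the number of proper `H`-colorings of `G`. -/
noncomputable def PDPCount {V W : Type*} {G : SimpleGraph V} (C : DPCover G W) : ℕ :=
  Nat.card {T : Set W // C.IsProperColoring T}

/-- The DP color function `P_DP(G,m)`: the minimum of `P_DP(G,H)` over all `m`-fold covers. -/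
noncomputable def PDP {V : Type*} (G : SimpleGraph V) (m : ℕ) : ℕ :=
  sInf {n | ∃ (W : Type) (C : DPCover G W), (∀ v, Nat.card ↥(C.L v) = m) ∧ n = PDPCount C}

/-- A cover is full if the matching between the lists of adjacent vertices is perfect. -/
def DPCover.IsFull {V W : Type*} {G : SimpleGraph V} (C : DPCover G W) : Prop :=
  ∀ ⦃u v : V⦄, G.Adj u v → ∀ x ∈ C.L u, ∃! y, y ∈ C.L v ∧ C.H.Adj x y
lemma proper_path_iff (n : ℕ) (L : Fin (n+1) → Finset ℕ) (f : Fin (n+1) → ℕ) :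
    ProperLColoring (pathGraph (n+1)) L f ↔
      (∀ v, f v ∈ L v) ∧ ∀ i : Fin n, f i.castSucc ≠ f i.succ := by
  constructor
  · rintro ⟨h1, h2⟩
    refine ⟨h1, fun i => h2 ?_⟩
    rw [pathGraph_adj]
    left
    simp [Fin.coe_castSucc, Fin.val_succ]
  · rintro ⟨h1, h2⟩
    refine ⟨h1, fun u w huw => ?_⟩
    rw [pathGraph_adj] at huw
    rcases huw with h | h
    · have hu : (u : ℕ) < n := by omega
      have := h2 ⟨u, hu⟩
      have e1 : (⟨u, hu⟩ : Fin n).castSucc = u := by ext; simp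
      have e2 : (⟨u, hu⟩ : Fin n).succ = w := by ext; simp [h]
      rwa [e1, e2] at this
    · have hw : (w : ℕ) < n := by omega
      have := (h2 ⟨w, hw⟩).symm
      have e1 : (⟨w, hw⟩ : Fin n).castSucc = w := by ext; simp
      have e2 : (⟨w, hw⟩ : Fin n).succ = u := by ext; simp [h]
      rwa [e1, e2] at this

noncomputable def Ncount (k : ℕ) (L : Fin (k+1) → Finset ℕ) (c d : ℕ) : ℕ :=
  Nat.card {f : Fin (k+1) → ℕ // ProperLColoring (pathGraph (k+1)) L f ∧
    f 0 = c ∧ f (Fin.last k) = d}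

open Classical in
lemma Ncount_eq (k : ℕ) (L : Fin (k+1) → Finset ℕ) (c d : ℕ) :
    Ncount k L c d = ((Fintype.piFinset L).filter
      (fun f => ProperLColoring (pathGraph (k+1)) L f ∧ f 0 = c ∧ f (Fin.last k) = d)).card := by
  have hset : {f : Fin (k+1) → ℕ | ProperLColoring (pathGraph (k+1)) L f ∧ f 0 = c ∧ f (Fin.last k) = d}
      = ↑((Fintype.piFinset L).filter
      (fun f => ProperLColoring (pathGraph (k+1)) L f ∧ f 0 = c ∧ f (Fin.last k) = d)) := by
    ext f
    simp only [Set.mem_setOf_eq, Finset.coe_filter, Fintype.mem_piFinset]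
    constructor
    · rintro ⟨h1, h2⟩; exact ⟨h1.1, h1, h2⟩
    · rintro ⟨_, h1, h2⟩; exact ⟨h1, h2⟩
  rw [show Ncount k L c d = Nat.card {f : Fin (k+1) → ℕ | ProperLColoring (pathGraph (k+1)) L f ∧ f 0 = c ∧ f (Fin.last k) = d} from rfl,
    Nat.card_coe_set_eq, hset, Set.ncard_coe_finset]

lemma Ncount_zero (L : Fin 1 → Finset ℕ) (c : ℕ) (hc : c ∈ L 0) :
    1 ≤ Ncount 0 L c c := by
  classical
  rw [Ncount_eq]
  refine Finset.card_pos.2 ⟨fun _ => c, ?_⟩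
  rw [Finset.mem_filter]
  refine ⟨?_, ?_, rfl, rfl⟩
  · rw [Fintype.mem_piFinset]
    intro v
    have : v = 0 := Fin.fin_one_eq_zero v
    rw [this]; exact hc
  · rw [proper_path_iff]
    exact ⟨fun v => by rw [Fin.fin_one_eq_zero v]; exact hc, fun i => i.elim0⟩

lemma Ncount_succ (k : ℕ) (L : Fin (k+2) → Finset ℕ) (c e : ℕ)
    (he : e ∈ L (Fin.last (k+1))) :
    Ncount (k+1) L c e = ∑ d ∈ (L (Fin.castSucc (Fin.last k))).filter (· ≠ e),
      Ncount k (L ∘ Fin.castSucc) c d := by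
  classical
  set L' : Fin (k+1) → Finset ℕ := L ∘ Fin.castSucc with hL'
  set D := (L (Fin.castSucc (Fin.last k))).filter (· ≠ e) with hD
  set U := (Fintype.piFinset L').filter
    (fun g => ProperLColoring (pathGraph (k+1)) L' g ∧ g 0 = c ∧ g (Fin.last k) ≠ e) with hU
  have hzero : (0 : Fin (k+2)) = Fin.castSucc 0 := by simp
  have step1 : Ncount (k+1) L c e = U.card := by
    rw [Ncount_eq]
    apply Finset.card_nbij' (fun f => f ∘ Fin.castSucc) (fun g => Fin.snoc g e)
    · intro f hf
      rw [Finset.mem_coe, Finset.mem_filter] at hf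
      obtain ⟨hpi, hp, h0, hl⟩ := hf
      rw [Fintype.mem_piFinset] at hpi
      rw [proper_path_iff] at hp
      rw [hU, Finset.mem_coe, Finset.mem_filter, Fintype.mem_piFinset]
      refine ⟨fun v => hpi _, ?_, ?_, ?_⟩
      · rw [proper_path_iff]
        refine ⟨fun v => hpi _, fun i => ?_⟩
        have := hp.2 i.castSucc
        rwa [Fin.succ_castSucc] at this
      · show f (Fin.castSucc 0) = c
        rw [← hzero]; exact h0
      · show f (Fin.castSucc (Fin.last k)) ≠ e
        have := hp.2 (Fin.last k)
        rw [Fin.succ_last, hl] at this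
        exact this
    · intro g hg
      simp only [hU, Finset.mem_coe] at hg
      rw [Finset.mem_filter, Fintype.mem_piFinset] at hg
      obtain ⟨hpi, hp, h0, hne⟩ := hg
      rw [proper_path_iff] at hp
      rw [Finset.mem_coe, Finset.mem_filter, Fintype.mem_piFinset]
      beta_reduce
      refine ⟨?_, ?_, ?_, ?_⟩
      · intro v
        refine Fin.lastCases ?_ ?_ v
        · rw [Fin.snoc_last]; exact he
        · intro i; rw [Fin.snoc_castSucc]; exact hpi i
      · rw [proper_path_iff]
        refine ⟨?_, ?_⟩
        · intro v
          refine Fin.lastCases ?_ ?_ v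
          · rw [Fin.snoc_last]; exact he
          · intro i; rw [Fin.snoc_castSucc]; exact hpi i
        · intro j
          refine Fin.lastCases ?_ ?_ j
          · rw [Fin.succ_last, Fin.snoc_last, Fin.snoc_castSucc]
            exact hne
          · intro i
            rw [Fin.succ_castSucc, Fin.snoc_castSucc, Fin.snoc_castSucc]
            exact hp.2 i
      · rw [hzero, Fin.snoc_castSucc]; exact h0
      · rw [Fin.snoc_last]
    · intro f hf
      rw [Finset.mem_coe, Finset.mem_filter] at hf
      beta_reduce
      funext v
      refine Fin.lastCases ?_ ?_ v
      · rw [Fin.snoc_last, hf.2.2.2]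
      · intro i; rw [Fin.snoc_castSucc]; rfl
    · intro g hg
      funext v
      simp [Function.comp]
  have hsub : ∀ g ∈ U, g (Fin.last k) ∈ D := by
    intro g hg
    rw [hU, Finset.mem_filter, Fintype.mem_piFinset] at hg
    rw [hD, Finset.mem_filter]
    exact ⟨hg.1 (Fin.last k), hg.2.2.2⟩
  have step2 : U.card = ∑ d ∈ D, (U.filter (fun g => g (Fin.last k) = d)).card :=
    Finset.card_eq_sum_card_fiberwise hsub
  rw [step1, step2]
  apply Finset.sum_congr rfl
  intro d hd
  rw [hD, Finset.mem_filter] at hd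
  rw [Ncount_eq]
  congr 1
  ext g
  rw [hU, Finset.mem_filter, Finset.mem_filter, Finset.mem_filter]
  constructor
  · rintro ⟨⟨hpi, hp, h0, _⟩, hl⟩
    exact ⟨hpi, hp, h0, hl⟩
  · rintro ⟨hpi, hp, h0, hl⟩
    exact ⟨⟨hpi, hp, h0, by rw [hl]; exact hd.2⟩, hl⟩

noncomputable def bq (m k : ℕ) : ℚ := (((m:ℚ) - 1)^k - (-1)^k) / m

lemma bq_nonneg {m : ℕ} (hm : 2 ≤ m) (k : ℕ) : 0 ≤ bq m k := by
  have hm1 : (1:ℚ) ≤ (m:ℚ) - 1 := by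
    have : (2:ℚ) ≤ m := by exact_mod_cast hm
    linarith
  have h1 : (1:ℚ) ≤ ((m:ℚ) - 1)^k := one_le_pow₀ hm1
  have h2 : ((-1):ℚ)^k ≤ 1 := by
    rcases Nat.even_or_odd k with h | h
    · rw [h.neg_one_pow]
    · rw [h.neg_one_pow]; norm_num
  have hm0 : (0:ℚ) < m := by positivity
  apply div_nonneg _ hm0.le
  linarith

lemma aq_nonneg {m : ℕ} (hm : 2 ≤ m) (k : ℕ) : 0 ≤ bq m k + (-1)^k := by
  have hm1 : (1:ℚ) ≤ (m:ℚ) - 1 := by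
    have : (2:ℚ) ≤ m := by exact_mod_cast hm
    linarith
  have hm0 : (0:ℚ) < m := by positivity
  rcases Nat.even_or_odd k with h | h
  · rw [h.neg_one_pow]
    have := bq_nonneg hm k
    linarith
  · rw [h.neg_one_pow, bq, h.neg_one_pow]
    have hk0 : k ≠ 0 := by rintro rfl; exact (Nat.not_odd_iff_even.2 (Even.zero)) h
    have h1 : (m:ℚ) - 1 ≤ ((m:ℚ) - 1)^k := le_self_pow₀ hm1 hk0
    have h2 : (0:ℚ) ≤ (((m:ℚ) - 1)^k - (m - 1)) / m := by
      apply div_nonneg _ hm0.le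
      linarith
    have h3 : (((m:ℚ) - 1)^k - (m - 1)) / m = (((m:ℚ) - 1)^k - (-1)) / m + (-1) := by
      field_simp
      ring
    linarith [h3 ▸ h2]

lemma bq_succ {m : ℕ} (hm : 2 ≤ m) (k : ℕ) :
    ((m:ℚ) - 1) * bq m k + (-1)^k = bq m (k+1) := by
  have hm0 : (m:ℚ) ≠ 0 := by positivity
  rw [bq, bq]
  field_simp
  ring

lemma main_lemma (m : ℕ) (hm : 2 ≤ m) :
    ∀ k (L : Fin (k+1) → Finset ℕ), (∀ v, (L v).card = m) → ∀ c ∈ L 0,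
      ∃ g ∈ L (Fin.last k),
        (bq m k + (-1)^k ≤ (Ncount k L c g : ℚ)) ∧
        ∀ d ∈ L (Fin.last k), d ≠ g → bq m k ≤ (Ncount k L c d : ℚ) := by
  intro k
  induction k with
  | zero =>
    intro L hL c hc
    refine ⟨c, hc, ?_, ?_⟩
    · have h1 := Ncount_zero L c hc
      have : (1:ℚ) ≤ (Ncount 0 L c c : ℚ) := by exact_mod_cast h1
      simp only [bq, pow_zero]
      simpa using this
    · intro d _ _
      simp only [bq, pow_zero]
      simp
  | succ k ih =>
    intro L hL c hc
    set L' : Fin (k+1) → Finset ℕ := L ∘ Fin.castSucc with hL'def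
    have hL' : ∀ v, (L' v).card = m := fun v => hL _
    have hc' : c ∈ L' 0 := by
      show c ∈ L (Fin.castSucc 0)
      simpa using hc
    obtain ⟨g, hg, hgα, hgβ⟩ := ih L' hL' c hc'
    have hm1 : ((m:ℚ) - 1) = ((m - 1 : ℕ) : ℚ) := by
      push_cast [Nat.cast_sub (by omega : 1 ≤ m)]
      ring
    have hm0 : (0:ℚ) < m := by positivity
    have hb0 := bq_nonneg hm k
    have ha0 := aq_nonneg hm k
    -- the general sum bound
    have hsum : ∀ S : Finset ℕ, S ⊆ L' (Fin.last k) →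
        (S.card : ℚ) * bq m k + (if g ∈ S then ((-1):ℚ)^k else 0) ≤
          ∑ d ∈ S, (Ncount k L' c d : ℚ) := by
      intro S hS
      have hterm : ∀ d ∈ S, (bq m k + (if d = g then ((-1):ℚ)^k else 0)) ≤
          (Ncount k L' c d : ℚ) := by
        intro d hd
        by_cases h : d = g
        · subst h; simpa using hgα
        · simpa [h] using hgβ d (hS hd) h
      calc (S.card : ℚ) * bq m k + (if g ∈ S then ((-1):ℚ)^k else 0)
          = ∑ d ∈ S, (bq m k + (if d = g then ((-1):ℚ)^k else 0)) := by
            rw [Finset.sum_add_distrib, Finset.sum_const, nsmul_eq_mul,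
              Finset.sum_ite_eq' S g (fun _ => ((-1):ℚ)^k)]
        _ ≤ _ := Finset.sum_le_sum hterm
    -- rewriting the count for the longer path
    have hrec : ∀ e ∈ L (Fin.last (k+1)),
        (Ncount (k+1) L c e : ℚ) = ∑ d ∈ (L' (Fin.last k)).erase e, (Ncount k L' c d : ℚ) := by
      intro e he
      rw [Ncount_succ k L c e he]
      push_cast
      rw [Finset.filter_ne']
      rfl
    -- the β bound, valid whenever e ≠ g
    have hbeta : ∀ e ∈ L (Fin.last (k+1)), e ≠ g →
        bq m (k+1) ≤ (Ncount (k+1) L c e : ℚ) := by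
      intro e he hne
      rw [hrec e he]
      have hgmem : g ∈ (L' (Fin.last k)).erase e :=
        Finset.mem_erase.2 ⟨fun h => hne (h.symm), hg⟩
      have hcard : m - 1 ≤ ((L' (Fin.last k)).erase e).card := by
        have h5 := Finset.pred_card_le_card_erase (s := L' (Fin.last k)) (a := e)
        have h6 := hL' (Fin.last k)
        omega
      have hcardq : ((m:ℚ) - 1) ≤ (((L' (Fin.last k)).erase e).card : ℚ) := by
        rw [hm1]
        exact_mod_cast hcard
      have := hsum ((L' (Fin.last k)).erase e) (Finset.erase_subset _ _)
      rw [if_pos hgmem] at this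
      have hineq : ((m:ℚ) - 1) * bq m k + (-1)^k ≤
          ((((L' (Fin.last k)).erase e).card : ℚ)) * bq m k + (-1)^k := by
        nlinarith
      rw [bq_succ hm k] at hineq
      linarith
    by_cases hcase : g ∈ L (Fin.last (k+1))
    · refine ⟨g, hcase, ?_, fun e he hne => hbeta e he hne⟩
      rw [hrec g hcase]
      have hne : g ∉ (L' (Fin.last k)).erase g := Finset.notMem_erase g _
      have hcard : ((L' (Fin.last k)).erase g).card = m - 1 := by
        rw [Finset.card_erase_of_mem hg, hL']
      have := hsum ((L' (Fin.last k)).erase g) (Finset.erase_subset _ _)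
      rw [if_neg hne, add_zero, hcard, ← hm1] at this
      have hid : ((m:ℚ) - 1) * bq m k = bq m (k+1) + (-1)^(k+1) := by
        rw [← bq_succ hm k, pow_succ]
        ring
      linarith [hid ▸ this]
    · have hnotsub : ¬ (L (Fin.last (k+1)) ⊆ L' (Fin.last k)) := by
        intro hsub
        have heq : L (Fin.last (k+1)) = L' (Fin.last k) :=
          Finset.eq_of_subset_of_card_le hsub (by rw [hL (Fin.last (k+1)), hL' (Fin.last k)])
        rw [heq] at hcase
        exact hcase hg
      obtain ⟨g', hg'mem, hg'not⟩ := Finset.not_subset.1 hnotsub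
      refine ⟨g', hg'mem, ?_, ?_⟩
      · rw [hrec g' hg'mem]
        have herase : (L' (Fin.last k)).erase g' = L' (Fin.last k) :=
          Finset.erase_eq_of_notMem hg'not
        rw [herase]
        have := hsum (L' (Fin.last k)) (Finset.Subset.refl _)
        rw [if_pos hg, hL' (Fin.last k)] at this
        have hid : ((m:ℚ) - 1) * bq m k = bq m (k+1) + (-1)^(k+1) := by
          rw [← bq_succ hm k, pow_succ]
          ring
        have h2 : ((m:ℚ)) * bq m k + (-1)^k = ((m:ℚ) - 1) * bq m k + (bq m k + (-1)^k) := by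
          ring
        linarith [hid, h2, this, ha0]
      · intro e he hne
        apply hbeta e he
        intro h
        rw [h] at he
        exact hcase he

theorem path_list_coloring_count_partition (k : ℕ) (hk : 1 ≤ k) (m : ℕ) (hm : 2 ≤ m)
    (L : Fin (k + 1) → Finset ℕ) (hL : ∀ v, (L v).card = m) :
    ∃ A B : Finset (ℕ × ℕ), Disjoint A B ∧ A ∪ B = (L 0) ×ˢ (L (Fin.last k)) ∧
      A.card = m ∧ B.card = m * (m - 1) ∧
      (∀ p ∈ A,
        (((m : ℚ) - 1) ^ k - (-1) ^ k) / m + (-1) ^ k ≤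
          (Nat.card {f : Fin (k + 1) → ℕ // ProperLColoring (pathGraph (k + 1)) L f ∧
            f 0 = p.1 ∧ f (Fin.last k) = p.2} : ℚ)) ∧
      (∀ p ∈ B,
        (((m : ℚ) - 1) ^ k - (-1) ^ k) / m ≤
          (Nat.card {f : Fin (k + 1) → ℕ // ProperLColoring (pathGraph (k + 1)) L f ∧
            f 0 = p.1 ∧ f (Fin.last k) = p.2} : ℚ)) := by
  classical
  have H : ∀ c : ℕ, c ∈ L 0 → ∃ g, g ∈ L (Fin.last k) ∧
      (bq m k + (-1)^k ≤ (Ncount k L c g : ℚ)) ∧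
      ∀ d ∈ L (Fin.last k), d ≠ g → bq m k ≤ (Ncount k L c d : ℚ) := by
    intro c hc
    obtain ⟨g, h1, h2, h3⟩ := main_lemma m hm k L hL c hc
    exact ⟨g, h1, h2, h3⟩
  choose g hg1 hg2 hg3 using H
  set A : Finset (ℕ × ℕ) :=
    Finset.image (fun c : {x // x ∈ L 0} => (c.1, g c.1 c.2)) (L 0).attach with hA
  set P : Finset (ℕ × ℕ) := (L 0) ×ˢ (L (Fin.last k)) with hP
  have hAP : A ⊆ P := by
    intro p hp
    rw [hA, Finset.mem_image] at hp
    obtain ⟨c, _, rfl⟩ := hp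
    rw [hP, Finset.mem_product]
    exact ⟨c.2, hg1 c.1 c.2⟩
  have hcardA : A.card = m := by
    rw [hA, Finset.card_image_of_injOn, Finset.card_attach, hL 0]
    intro x _ y _ hxy
    exact Subtype.ext (congrArg Prod.fst hxy)
  refine ⟨A, P \ A, Finset.disjoint_sdiff, Finset.union_sdiff_of_subset hAP, hcardA, ?_, ?_, ?_⟩
  · rw [Finset.card_sdiff_of_subset hAP, hcardA, hP, Finset.card_product, hL 0, hL (Fin.last k)]
    obtain ⟨n, rfl⟩ := Nat.exists_eq_add_of_le hm
    have h1 : 2 + n - 1 = 1 + n := by omega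
    rw [h1]
    have h2 : (2+n) * (2+n) = (2+n) * (1+n) + (2+n) := by ring
    omega
  · intro p hp
    rw [hA, Finset.mem_image] at hp
    obtain ⟨c, _, rfl⟩ := hp
    exact hg2 c.1 c.2
  · intro p hp
    rw [Finset.mem_sdiff, hP, Finset.mem_product] at hp
    obtain ⟨⟨hc, hd⟩, hpA⟩ := hp
    have hne : p.2 ≠ g p.1 hc := by
      intro h
      apply hpA
      rw [hA, Finset.mem_image]
      exact ⟨⟨p.1, hc⟩, Finset.mem_attach _ _, by rw [← h]⟩
    exact hg3 p.1 hc p.2 hd hne
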